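/- C^1 joining condition across an edge: let t = [v_i, v_j, v_k] and t' = [v_i, v_j, v_{k'}] be two nondegenerate triangles sharing the edge [v_i, v_j], with v_k and v_{k'} on opposite sides of the line through v_i and v_j. Let P and P' be bivariate cubic polynomials on t and t' with Bernstein–Bézier coefficients β_d and β'_d respectively. If P and P' agree to first order at v_i and at v_j (same values and gradients at both vertices) and moreover β'_{(1,1,1)} = τ_i(v_{k'}) β_{(2,1,0)} + τ_j(v_{k'}) β_{(1,2,0)} + τ_k(v_{k'}) β_{(1,1,1)}, where (τ_i, τ_j, τ_k) are the barycentric coordinates with respect to t, then the function equal to P on t and P' on t' is continuously differentiable across the interior of the edge [v_i, v_j]. -/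

import Mathlib

open Finset

/-- The set of multi-indices of nonnegative integers summing to 3. -/
def D3 : Finset (ℕ × ℕ × ℕ) :=
  ((range 4) ×ˢ (range 4) ×ˢ (range 4)).filter fun d => d.1 + d.2.1 + d.2.2 = 3

/-- The cubic Bernstein basis polynomial associated with barycentric
coordinate functions `τ0, τ1, τ2` and a multi-index `d`. -/
noncomputable def bern (τ0 τ1 τ2 : EuclideanSpace ℝ (Fin 2) → ℝ)
    (d : ℕ × ℕ × ℕ) (p : EuclideanSpace ℝ (Fin 2)) : ℝ :=
  ((Nat.factorial 3 : ℝ) /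
      ((Nat.factorial d.1 : ℝ) * (Nat.factorial d.2.1) * (Nat.factorial d.2.2))) *
    τ0 p ^ d.1 * τ1 p ^ d.2.1 * τ2 p ^ d.2.2

def cub (γ : ℕ × ℕ × ℕ → ℝ) (x y z : ℝ) : ℝ :=
  γ (3,0,0) * x^3 + (3*γ (2,1,0)) * (x^2*y) + (3*γ (1,2,0)) * (x*y^2) + γ (0,3,0) * y^3
  + (3*γ (2,0,1)) * (x^2*z) + (6*γ (1,1,1)) * (x*y*z) + (3*γ (0,2,1)) * (y^2*z)
  + (3*γ (1,0,2)) * (x*z^2) + (3*γ (0,1,2)) * (y*z^2) + γ (0,0,3) * z^3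

def cubx (γ : ℕ × ℕ × ℕ → ℝ) (x y z : ℝ) : ℝ :=
  3*γ (3,0,0)*x^2 + 6*γ (2,1,0)*x*y + 3*γ (1,2,0)*y^2 + 6*γ (2,0,1)*x*z + 6*γ (1,1,1)*y*z + 3*γ (1,0,2)*z^2
def cuby (γ : ℕ × ℕ × ℕ → ℝ) (x y z : ℝ) : ℝ :=
  3*γ (2,1,0)*x^2 + 6*γ (1,2,0)*x*y + 3*γ (0,3,0)*y^2 + 6*γ (1,1,1)*x*z + 6*γ (0,2,1)*y*z + 3*γ (0,1,2)*z^2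
def cubz (γ : ℕ × ℕ × ℕ → ℝ) (x y z : ℝ) : ℝ :=
  3*γ (2,0,1)*x^2 + 6*γ (1,1,1)*x*y + 3*γ (0,2,1)*y^2 + 6*γ (1,0,2)*x*z + 6*γ (0,1,2)*y*z + γ (0,0,3)*(3*z^2)

lemma sum_D3 (f : ℕ × ℕ × ℕ → ℝ) :
    ∑ d ∈ D3, f d = f (3,0,0) + f (2,1,0) + f (1,2,0) + f (0,3,0) + f (2,0,1)
      + f (1,1,1) + f (0,2,1) + f (1,0,2) + f (0,1,2) + f (0,0,3) := by
  have h : D3 = {(3,0,0),(2,1,0),(1,2,0),(0,3,0),(2,0,1),(1,1,1),(0,2,1),(1,0,2),(0,1,2),(0,0,3)} := by decide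
  rw [h]
  repeat rw [Finset.sum_insert (by decide)]
  rw [Finset.sum_singleton]
  ring

lemma cub_eval (γ : ℕ × ℕ × ℕ → ℝ) (τ0 τ1 τ2 : EuclideanSpace ℝ (Fin 2) → ℝ)
    (p : EuclideanSpace ℝ (Fin 2)) :
    ∑ d ∈ D3, γ d * bern τ0 τ1 τ2 d p = cub γ (τ0 p) (τ1 p) (τ2 p) := by
  rw [sum_D3]
  simp [bern, cub, Nat.factorial]
  ring

lemma hasDerivAt_cub (γ : ℕ × ℕ × ℕ → ℝ) (a0 a1 b0 b1 c0 c1 s0 : ℝ) :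
    HasDerivAt (fun s => cub γ (a0+a1*s) (b0+b1*s) (c0+c1*s))
      (cubx γ (a0+a1*s0) (b0+b1*s0) (c0+c1*s0) * a1
       + cuby γ (a0+a1*s0) (b0+b1*s0) (c0+c1*s0) * b1
       + cubz γ (a0+a1*s0) (b0+b1*s0) (c0+c1*s0) * c1) s0 := by
  have ha : HasDerivAt (fun s : ℝ => a0 + a1 * s) a1 s0 := by
    simpa using ((hasDerivAt_id s0).const_mul a1).const_add a0
  have hb : HasDerivAt (fun s : ℝ => b0 + b1 * s) b1 s0 := by
    simpa using ((hasDerivAt_id s0).const_mul b1).const_add b0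
  have hc : HasDerivAt (fun s : ℝ => c0 + c1 * s) c1 s0 := by
    simpa using ((hasDerivAt_id s0).const_mul c1).const_add c0
  have H := ((((((((((ha.pow 3).const_mul (γ (3,0,0))).add
    (((ha.pow 2).mul hb).const_mul (3*γ (2,1,0)))).add
    ((ha.mul (hb.pow 2)).const_mul (3*γ (1,2,0)))).add
    ((hb.pow 3).const_mul (γ (0,3,0)))).add
    (((ha.pow 2).mul hc).const_mul (3*γ (2,0,1)))).add
    (((ha.mul hb).mul hc).const_mul (6*γ (1,1,1)))).add
    (((hb.pow 2).mul hc).const_mul (3*γ (0,2,1)))).add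
    ((ha.mul (hc.pow 2)).const_mul (3*γ (1,0,2)))).add
    ((hb.mul (hc.pow 2)).const_mul (3*γ (0,1,2)))).add
    ((hc.pow 3).const_mul (γ (0,0,3)))
  refine H.congr_deriv ?_
  norm_num [cubx, cuby, cubz]
  ring

set_option maxHeartbeats 1600000 in
/-- the C¹ joining condition across a shared edge. -/
theorem c1_join_across_edge
    (vi vj vk vk' : EuclideanSpace ℝ (Fin 2))
    (ht : AffineIndependent ℝ ![vi, vj, vk])
    (ht' : AffineIndependent ℝ ![vi, vj, vk'])
    (τi τj τk : EuclideanSpace ℝ (Fin 2) → ℝ)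
    (hbary : ∀ p, τi p + τj p + τk p = 1 ∧
      p = τi p • vi + τj p • vj + τk p • vk)
    -- vk and vk' lie on opposite sides of the line through vi and vj:
    (hopp : τk vk' < 0)
    (τi' τj' τk' : EuclideanSpace ℝ (Fin 2) → ℝ)
    (hbary' : ∀ p, τi' p + τj' p + τk' p = 1 ∧
      p = τi' p • vi + τj' p • vj + τk' p • vk')
    (P P' : EuclideanSpace ℝ (Fin 2) → ℝ) (β β' : ℕ × ℕ × ℕ → ℝ)
    (hP : ∀ p, P p = ∑ d ∈ D3, β d * bern τi τj τk d p)
    (hP' : ∀ p, P' p = ∑ d ∈ D3, β' d * bern τi' τj' τk' d p)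
    -- P and P' agree to first order at vi and vj:
    (hvi : P vi = P' vi) (hvi' : fderiv ℝ P vi = fderiv ℝ P' vi)
    (hvj : P vj = P' vj) (hvj' : fderiv ℝ P vj = fderiv ℝ P' vj)
    -- the coefficient condition:
    (hcoef : β' (1, 1, 1) =
      τi vk' * β (2, 1, 0) + τj vk' * β (1, 2, 0) + τk vk' * β (1, 1, 1))
    -- S equals P on the triangle t and P' elsewhere (in particular on t'):
    (S : EuclideanSpace ℝ (Fin 2) → ℝ)
    (hS : ∀ q, (q ∈ convexHull ℝ ({vi, vj, vk} : Set (EuclideanSpace ℝ (Fin 2))) →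
        S q = P q) ∧
      (q ∉ convexHull ℝ ({vi, vj, vk} : Set (EuclideanSpace ℝ (Fin 2))) →
        S q = P' q)) :
    ∀ p ∈ openSegment ℝ vi vj, ContDiffAt ℝ 1 S p := by
  intro p hp
  classical
  -- linear independence of edge vectors
  have keypair : ∀ (a b c : EuclideanSpace ℝ (Fin 2)), AffineIndependent ℝ ![a, b, c] →
      ∀ α γ : ℝ, α • (b - a) + γ • (c - a) = 0 → α = 0 ∧ γ = 0 := by
    intro a b c hind α γ hz
    have hw0 : (Finset.univ : Finset (Fin 3)).sum ![-(α+γ), α, γ] = 0 := by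
      simp [Fin.sum_univ_three]
    have hcomb : ∑ e ∈ (Finset.univ : Finset (Fin 3)), ![-(α+γ), α, γ] e • ![a, b, c] e = 0 := by
      rw [Fin.sum_univ_three]
      simp only [Matrix.cons_val_zero, Matrix.cons_val_one, Matrix.head_cons,
        Matrix.cons_val_two, Matrix.tail_cons]
      rw [show (-(α+γ)) • a + α • b + γ • c = α • (b - a) + γ • (c - a) by module, hz]
    have hall := affineIndependent_iff.mp hind Finset.univ ![-(α+γ), α, γ] hw0 hcomb
    exact ⟨by simpa using hall 1 (Finset.mem_univ _), by simpa using hall 2 (Finset.mem_univ _)⟩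
  have tau_eq_gen : ∀ (a b c : EuclideanSpace ℝ (Fin 2)), AffineIndependent ℝ ![a, b, c] →
      ∀ (σ0 σ1 σ2 : EuclideanSpace ℝ (Fin 2) → ℝ),
      (∀ q, σ0 q + σ1 q + σ2 q = 1 ∧ q = σ0 q • a + σ1 q • b + σ2 q • c) →
      ∀ q (x y z : ℝ), x + y + z = 1 → q = x • a + y • b + z • c →
        σ0 q = x ∧ σ1 q = y ∧ σ2 q = z := by
    intro a b c hind σ0 σ1 σ2 hbg q x y z hsum hq
    obtain ⟨hs, hr⟩ := hbg q
    have h0 : (y - σ1 q) • (b - a) + (z - σ2 q) • (c - a) = 0 := by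
      have e1 : x = 1 - y - z := by linarith
      have e2 : σ0 q = 1 - σ1 q - σ2 q := by linarith
      have hmod : (y - σ1 q) • (b - a) + (z - σ2 q) • (c - a)
          = (x • a + y • b + z • c) - (σ0 q • a + σ1 q • b + σ2 q • c) := by
        rw [e1, e2]; module
      rw [hmod, ← hq, ← hr, sub_self]
    obtain ⟨h1, h2⟩ := keypair a b c hind _ _ h0
    exact ⟨by linarith, by linarith, by linarith⟩
  have tau_eq := tau_eq_gen vi vj vk ht τi τj τk hbary
  have tau'_eq := tau_eq_gen vi vj vk' ht' τi' τj' τk' hbary'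
  have hLI : LinearIndependent ℝ ![vj - vi, vk - vi] :=
    LinearIndependent.pair_iff.mpr fun s t h => keypair vi vj vk ht s t h
  have hLI' : LinearIndependent ℝ ![vj - vi, vk' - vi] :=
    LinearIndependent.pair_iff.mpr fun s t h => keypair vi vj vk' ht' s t h
  have hcard : Fintype.card (Fin 2) = Module.finrank ℝ (EuclideanSpace ℝ (Fin 2)) := by
    simp [finrank_euclideanSpace]
  set b2 : Module.Basis (Fin 2) ℝ (EuclideanSpace ℝ (Fin 2)) :=
    basisOfLinearIndependentOfCardEqFinrank hLI hcard with hb2def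
  set b2' : Module.Basis (Fin 2) ℝ (EuclideanSpace ℝ (Fin 2)) :=
    basisOfLinearIndependentOfCardEqFinrank hLI' hcard with hb2'def
  have hb20 : b2 0 = vj - vi := by
    rw [hb2def]; exact congrFun (coe_basisOfLinearIndependentOfCardEqFinrank hLI hcard) 0
  have hb21 : b2 1 = vk - vi := by
    rw [hb2def]; exact congrFun (coe_basisOfLinearIndependentOfCardEqFinrank hLI hcard) 1
  have hb2'0 : b2' 0 = vj - vi := by
    rw [hb2'def]; exact congrFun (coe_basisOfLinearIndependentOfCardEqFinrank hLI' hcard) 0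
  have hb2'1 : b2' 1 = vk' - vi := by
    rw [hb2'def]; exact congrFun (coe_basisOfLinearIndependentOfCardEqFinrank hLI' hcard) 1
  -- smoothness of linear coordinate maps
  have hsm : ∀ (f : EuclideanSpace ℝ (Fin 2) →ₗ[ℝ] ℝ) (v0 : EuclideanSpace ℝ (Fin 2)),
      ContDiff ℝ 1 (fun q => f (q - v0)) := by
    intro f v0
    have h1 : ContDiff ℝ 1 (LinearMap.toContinuousLinearMap f) :=
      (LinearMap.toContinuousLinearMap f).contDiff
    have h3 : (fun q => f (q - v0)) = fun q => (LinearMap.toContinuousLinearMap f) q - f v0 := by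
      funext q; simp [map_sub]
    rw [h3]
    exact h1.sub contDiff_const
  have hτj_eq : ∀ q, τj q = b2.coord 0 (q - vi) := by
    intro q
    obtain ⟨hs, hr⟩ := hbary q
    have e2 : τi q = 1 - τj q - τk q := by linarith
    have hd : q - vi = τj q • b2 0 + τk q • b2 1 := by
      rw [hb20, hb21]
      conv_lhs => rw [hr]
      rw [e2]; module
    rw [hd]
    simp [map_add, map_smul, Module.Basis.coord_apply, Module.Basis.repr_self_apply]
  have hτk_eq : ∀ q, τk q = b2.coord 1 (q - vi) := by
    intro q
    obtain ⟨hs, hr⟩ := hbary q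
    have e2 : τi q = 1 - τj q - τk q := by linarith
    have hd : q - vi = τj q • b2 0 + τk q • b2 1 := by
      rw [hb20, hb21]
      conv_lhs => rw [hr]
      rw [e2]; module
    rw [hd]
    simp [map_add, map_smul, Module.Basis.coord_apply, Module.Basis.repr_self_apply]
  have hτj'_eq : ∀ q, τj' q = b2'.coord 0 (q - vi) := by
    intro q
    obtain ⟨hs, hr⟩ := hbary' q
    have e2 : τi' q = 1 - τj' q - τk' q := by linarith
    have hd : q - vi = τj' q • b2' 0 + τk' q • b2' 1 := by
      rw [hb2'0, hb2'1]
      conv_lhs => rw [hr]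
      rw [e2]; module
    rw [hd]
    simp [map_add, map_smul, Module.Basis.coord_apply, Module.Basis.repr_self_apply]
  have hτk'_eq : ∀ q, τk' q = b2'.coord 1 (q - vi) := by
    intro q
    obtain ⟨hs, hr⟩ := hbary' q
    have e2 : τi' q = 1 - τj' q - τk' q := by linarith
    have hd : q - vi = τj' q • b2' 0 + τk' q • b2' 1 := by
      rw [hb2'0, hb2'1]
      conv_lhs => rw [hr]
      rw [e2]; module
    rw [hd]
    simp [map_add, map_smul, Module.Basis.coord_apply, Module.Basis.repr_self_apply]
  have hτjc : ContDiff ℝ 1 τj := by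
    rw [show τj = fun q => b2.coord 0 (q - vi) from funext hτj_eq]; exact hsm _ _
  have hτkc : ContDiff ℝ 1 τk := by
    rw [show τk = fun q => b2.coord 1 (q - vi) from funext hτk_eq]; exact hsm _ _
  have hτic : ContDiff ℝ 1 τi := by
    rw [show τi = fun q => 1 - τj q - τk q from funext fun q => by have := (hbary q).1; linarith]
    exact (contDiff_const.sub hτjc).sub hτkc
  have hτj'c : ContDiff ℝ 1 τj' := by
    rw [show τj' = fun q => b2'.coord 0 (q - vi) from funext hτj'_eq]; exact hsm _ _
  have hτk'c : ContDiff ℝ 1 τk' := by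
    rw [show τk' = fun q => b2'.coord 1 (q - vi) from funext hτk'_eq]; exact hsm _ _
  have hτi'c : ContDiff ℝ 1 τi' := by
    rw [show τi' = fun q => 1 - τj' q - τk' q from funext fun q => by have := (hbary' q).1; linarith]
    exact (contDiff_const.sub hτj'c).sub hτk'c
  -- smoothness of P, P'
  have hPcub : ∀ q, P q = cub β (τi q) (τj q) (τk q) := fun q => by rw [hP q, cub_eval]
  have hP'cub : ∀ q, P' q = cub β' (τi' q) (τj' q) (τk' q) := fun q => by rw [hP' q, cub_eval]
  have hPc : ContDiff ℝ 1 P := by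
    rw [show P = fun q => cub β (τi q) (τj q) (τk q) from funext hPcub]
    simp only [cub]
    fun_prop
  have hP'c : ContDiff ℝ 1 P' := by
    rw [show P' = fun q => cub β' (τi' q) (τj' q) (τk' q) from funext hP'cub]
    simp only [cub]
    fun_prop
  have hdP : ∀ x, DifferentiableAt ℝ P x := fun x => (hPc.differentiable one_ne_zero) x
  have hdP' : ∀ x, DifferentiableAt ℝ P' x := fun x => (hP'c.differentiable one_ne_zero) x
  have hDc : ContDiff ℝ 1 (fun q => P' q - P q) := hP'c.sub hPc
  -- directional derivative via chain rule
  have dirchain : ∀ (F : EuclideanSpace ℝ (Fin 2) → ℝ), ContDiff ℝ 1 F →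
      ∀ (x v : EuclideanSpace ℝ (Fin 2)),
      HasDerivAt (fun s : ℝ => F (x + s • v)) (fderiv ℝ F x v) 0 := by
    intro F hF x v
    have hc : HasDerivAt (fun s : ℝ => x + s • v) v 0 := by
      simpa using ((hasDerivAt_id (0:ℝ)).smul_const v).const_add x
    have hFd : HasFDerivAt F (fderiv ℝ F x) ((fun s : ℝ => x + s • v) 0) := by
      rw [show (fun s : ℝ => x + s • v) 0 = x by simp]
      exact (hF.differentiable one_ne_zero x).hasFDerivAt
    exact hFd.comp_hasDerivAt 0 hc
  -- the master computation at points of the edge line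
  have master : ∀ x : EuclideanSpace ℝ (Fin 2), τk x = 0 →
      (P' x - P x = cub β' (1 - τj x) (τj x) 0 - cub β (1 - τj x) (τj x) 0)
      ∧ (fderiv ℝ (fun q => P' q - P q) x (vj - vi)
          = (cubx β' (1 - τj x) (τj x) 0 * (-1) + cuby β' (1 - τj x) (τj x) 0 * 1
              + cubz β' (1 - τj x) (τj x) 0 * 0)
            - (cubx β (1 - τj x) (τj x) 0 * (-1) + cuby β (1 - τj x) (τj x) 0 * 1
              + cubz β (1 - τj x) (τj x) 0 * 0))
      ∧ (fderiv ℝ (fun q => P' q - P q) x (vk' - vi)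
          = (cubx β' (1 - τj x) (τj x) 0 * (-1) + cuby β' (1 - τj x) (τj x) 0 * 0
              + cubz β' (1 - τj x) (τj x) 0 * 1)
            - (cubx β (1 - τj x) (τj x) 0 * (τi vk' - 1) + cuby β (1 - τj x) (τj x) 0 * (τj vk')
              + cubz β (1 - τj x) (τj x) 0 * (τk vk'))) := by
    intro x hx0
    set ti := τi vk' with htidef
    set tj := τj vk' with htjdef
    set tk := τk vk' with htkdef
    set t := τj x with htdef
    have hsx := (hbary x).1
    have hrx := (hbary x).2
    have e : τi x = 1 - t := by rw [htdef]; linarith [hx0]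
    have hxrep : x = (1 - t) • vi + t • vj + (0:ℝ) • vk := by
      conv_lhs => rw [hrx]
      rw [e, hx0, htdef]
    have hxrep' : x = (1 - t) • vi + t • vj + (0:ℝ) • vk' := by rw [hxrep]; module
    have hvk'r : vk' = ti • vi + tj • vj + tk • vk := by
      rw [htidef, htjdef, htkdef]; exact (hbary vk').2
    have hvk's : ti + tj + tk = 1 := (hbary vk').1
    have hcu : ∀ s : ℝ, x + s • (vj - vi)
        = ((1-t) + (-1)*s) • vi + (t + 1*s) • vj + ((0:ℝ) + 0*s) • vk := by
      intro s; rw [hxrep]; module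
    have hcu' : ∀ s : ℝ, x + s • (vj - vi)
        = ((1-t) + (-1)*s) • vi + (t + 1*s) • vj + ((0:ℝ) + 0*s) • vk' := by
      intro s; rw [hxrep]; module
    have hcw : ∀ s : ℝ, x + s • (vk' - vi)
        = ((1-t) + (ti - 1)*s) • vi + (t + tj*s) • vj + ((0:ℝ) + tk*s) • vk := by
      intro s
      rw [hxrep]
      conv_lhs => rw [hvk'r]
      module
    have hcw' : ∀ s : ℝ, x + s • (vk' - vi)
        = ((1-t) + (-1)*s) • vi + (t + 0*s) • vj + ((0:ℝ) + 1*s) • vk' := by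
      intro s; rw [hxrep']; module
    have hsum1 : ∀ s : ℝ, ((1-t) + (-1)*s) + (t + 1*s) + ((0:ℝ) + 0*s) = 1 := by intro s; ring
    have hsum2 : ∀ s : ℝ, ((1-t) + (ti - 1)*s) + (t + tj*s) + ((0:ℝ) + tk*s) = 1 := by
      intro s; linear_combination s * hvk's
    have hsum3 : ∀ s : ℝ, ((1-t) + (-1)*s) + (t + 0*s) + ((0:ℝ) + 1*s) = 1 := by intro s; ring
    have hfu : (fun s : ℝ => P' (x + s • (vj - vi)) - P (x + s • (vj - vi)))
        = fun s => cub β' ((1-t) + (-1)*s) (t + 1*s) ((0:ℝ) + 0*s)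
            - cub β ((1-t) + (-1)*s) (t + 1*s) ((0:ℝ) + 0*s) := by
      funext s
      obtain ⟨ha1, ha2, ha3⟩ := tau_eq (x + s • (vj - vi)) _ _ _ (hsum1 s) (hcu s)
      obtain ⟨hb1, hb2, hb3⟩ := tau'_eq (x + s • (vj - vi)) _ _ _ (hsum1 s) (hcu' s)
      rw [hPcub, hP'cub, ha1, ha2, ha3, hb1, hb2, hb3]
    have hfw : (fun s : ℝ => P' (x + s • (vk' - vi)) - P (x + s • (vk' - vi)))
        = fun s => cub β' ((1-t) + (-1)*s) (t + 0*s) ((0:ℝ) + 1*s)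
            - cub β ((1-t) + (ti - 1)*s) (t + tj*s) ((0:ℝ) + tk*s) := by
      funext s
      obtain ⟨ha1, ha2, ha3⟩ := tau_eq (x + s • (vk' - vi)) _ _ _ (hsum2 s) (hcw s)
      obtain ⟨hb1, hb2, hb3⟩ := tau'_eq (x + s • (vk' - vi)) _ _ _ (hsum3 s) (hcw' s)
      rw [hPcub, hP'cub, ha1, ha2, ha3, hb1, hb2, hb3]
    have hder1 : HasDerivAt (fun s : ℝ => P' (x + s • (vj - vi)) - P (x + s • (vj - vi)))
        ((cubx β' ((1-t)+(-1)*0) (t+1*0) ((0:ℝ)+0*0) * (-1)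
          + cuby β' ((1-t)+(-1)*0) (t+1*0) ((0:ℝ)+0*0) * 1
          + cubz β' ((1-t)+(-1)*0) (t+1*0) ((0:ℝ)+0*0) * 0)
         - (cubx β ((1-t)+(-1)*0) (t+1*0) ((0:ℝ)+0*0) * (-1)
          + cuby β ((1-t)+(-1)*0) (t+1*0) ((0:ℝ)+0*0) * 1
          + cubz β ((1-t)+(-1)*0) (t+1*0) ((0:ℝ)+0*0) * 0)) 0 := by
      rw [hfu]
      exact (hasDerivAt_cub β' (1-t) (-1) t 1 0 0 0).sub (hasDerivAt_cub β (1-t) (-1) t 1 0 0 0)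
    have hder2 : HasDerivAt (fun s : ℝ => P' (x + s • (vk' - vi)) - P (x + s • (vk' - vi)))
        ((cubx β' ((1-t)+(-1)*0) (t+0*0) ((0:ℝ)+1*0) * (-1)
          + cuby β' ((1-t)+(-1)*0) (t+0*0) ((0:ℝ)+1*0) * 0
          + cubz β' ((1-t)+(-1)*0) (t+0*0) ((0:ℝ)+1*0) * 1)
         - (cubx β ((1-t)+(ti-1)*0) (t+tj*0) ((0:ℝ)+tk*0) * (ti - 1)
          + cuby β ((1-t)+(ti-1)*0) (t+tj*0) ((0:ℝ)+tk*0) * tj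
          + cubz β ((1-t)+(ti-1)*0) (t+tj*0) ((0:ℝ)+tk*0) * tk)) 0 := by
      rw [hfw]
      exact (hasDerivAt_cub β' (1-t) (-1) t 0 0 1 0).sub (hasDerivAt_cub β (1-t) (ti-1) t tj 0 tk 0)
    have hchain1 := dirchain (fun q => P' q - P q) hDc x (vj - vi)
    have hchain2 := dirchain (fun q => P' q - P q) hDc x (vk' - vi)
    refine ⟨?_, ?_, ?_⟩
    · obtain ⟨ha1, ha2, ha3⟩ := tau_eq x (1 - t) t 0 (by ring) hxrep
      obtain ⟨hb1, hb2, hb3⟩ := tau'_eq x (1 - t) t 0 (by ring) hxrep'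
      rw [hPcub, hP'cub, ha1, ha2, ha3, hb1, hb2, hb3]
    · rw [hchain1.unique hder1]
      norm_num
    · rw [hchain2.unique hder2]
      simp only [cubx, cuby, cubz]
      ring
  -- coordinates at the two vertices
  obtain ⟨hvii, hvij, hvik⟩ := tau_eq vi 1 0 0 (by norm_num) (by module)
  obtain ⟨hvji, hvjj, hvjk⟩ := tau_eq vj 0 1 0 (by norm_num) (by module)
  -- first-order agreement in function form
  have hDvi : P' vi - P vi = 0 := by rw [hvi]; ring
  have hDvj : P' vj - P vj = 0 := by rw [hvj]; ring
  have hfdvi : fderiv ℝ (fun q => P' q - P q) vi = 0 := by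
    rw [fderiv_fun_sub (hdP' vi) (hdP vi), hvi', sub_self]
  have hfdvj : fderiv ℝ (fun q => P' q - P q) vj = 0 := by
    rw [fderiv_fun_sub (hdP' vj) (hdP vj), hvj', sub_self]
  -- scalar coefficient identities
  obtain ⟨m1i, m2i, m3i⟩ := master vi hvik
  obtain ⟨m1j, m2j, m3j⟩ := master vj hvjk
  rw [hvij] at m1i m2i m3i
  rw [hvjj] at m1j m2j m3j
  rw [hDvi] at m1i
  rw [hDvj] at m1j
  rw [hfdvi] at m2i m3i
  rw [hfdvj] at m2j m3j
  simp only [ContinuousLinearMap.zero_apply] at m2i m3i m2j m3j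
  simp only [cub, cubx, cuby, cubz] at m1i m2i m3i m1j m2j m3j
  have e1 : β' (3,0,0) = β (3,0,0) := by linear_combination -m1i
  have e2 : β' (0,3,0) = β (0,3,0) := by linear_combination -m1j
  have e3 : β' (2,1,0) = β (2,1,0) := by linear_combination (-1/3 : ℝ) * m2i + e1
  have e4 : β' (1,2,0) = β (1,2,0) := by linear_combination (1/3 : ℝ) * m2j + e2
  have e5 : β' (2,0,1) = τi vk' * β (3,0,0) + τj vk' * β (2,1,0) + τk vk' * β (2,0,1) := by
    linear_combination (-1/3 : ℝ) * m3i + e1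
  have e6 : β' (0,2,1) = τi vk' * β (1,2,0) + τj vk' * β (0,3,0) + τk vk' * β (0,2,1) := by
    linear_combination (-1/3 : ℝ) * m3j + e4
  -- the key vanishing on the edge line
  have key : ∀ x : EuclideanSpace ℝ (Fin 2), τk x = 0 →
      P' x - P x = 0 ∧ fderiv ℝ (fun q => P' q - P q) x = 0 := by
    intro x hx0
    obtain ⟨m1, m2, m3⟩ := master x hx0
    constructor
    · rw [m1]; simp only [cub]
      linear_combination (1 - τj x)^3 * e1 + 3*(1 - τj x)^2*(τj x) * e3
        + 3*(1 - τj x)*(τj x)^2 * e4 + (τj x)^3 * e2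
    · have hu0 : fderiv ℝ (fun q => P' q - P q) x (vj - vi) = 0 := by
        rw [m2]; simp only [cubx, cuby, cubz]
        linear_combination (-3*(1 - τj x)^2) * e1 + (3*(1 - τj x)^2 - 6*(1 - τj x)*(τj x)) * e3
          + (6*(1 - τj x)*(τj x) - 3*(τj x)^2) * e4 + 3*(τj x)^2 * e2
      have hw0 : fderiv ℝ (fun q => P' q - P q) x (vk' - vi) = 0 := by
        rw [m3]; simp only [cubx, cuby, cubz]
        linear_combination (-3*(1 - τj x)^2) * e1 + (-6*(1 - τj x)*(τj x)) * e3
          + (-3*(τj x)^2) * e4 + (3*(1 - τj x)^2) * e5 + (6*(1 - τj x)*(τj x)) * hcoef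
          + (3*(τj x)^2) * e6
      ext v
      have hv := b2'.sum_repr v
      rw [Fin.sum_univ_two, hb2'0, hb2'1] at hv
      rw [← hv]
      rw [map_add, map_smul, map_smul, hu0, hw0]
      simp
  -- distinctness of vertices
  have hne01 : vi ≠ vj := fun h =>
    (by decide : ¬((0 : Fin 3) = 1)) (ht.injective (by simp [h]))
  have hne02 : vi ≠ vk := fun h =>
    (by decide : ¬((0 : Fin 3) = 2)) (ht.injective (by simp [h]))
  have hne12 : vj ≠ vk := fun h =>
    (by decide : ¬((1 : Fin 3) = 2)) (ht.injective (by simp [h]))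
  -- convex hull characterization
  have hull_iff : ∀ q : EuclideanSpace ℝ (Fin 2),
      q ∈ convexHull ℝ ({vi, vj, vk} : Set (EuclideanSpace ℝ (Fin 2)))
        ↔ (0 ≤ τi q ∧ 0 ≤ τj q ∧ 0 ≤ τk q) := by
    intro q
    constructor
    · intro hq
      rw [show ({vi, vj, vk} : Set (EuclideanSpace ℝ (Fin 2)))
            = (↑({vi, vj, vk} : Finset (EuclideanSpace ℝ (Fin 2))) : Set (EuclideanSpace ℝ (Fin 2)))
          by simp, Finset.convexHull_eq] at hq
      obtain ⟨wf, hw0, hw1, hwq⟩ := hq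
      have hmem1 : vi ∉ ({vj, vk} : Finset (EuclideanSpace ℝ (Fin 2))) := by
        simp [hne01, hne02]
      have hmem2 : vj ∉ ({vk} : Finset (EuclideanSpace ℝ (Fin 2))) := by simp [hne12]
      rw [Finset.sum_insert hmem1, Finset.sum_insert hmem2, Finset.sum_singleton] at hw1
      rw [Finset.centerMass_eq_of_sum_1 _ _ (by
        rw [Finset.sum_insert hmem1, Finset.sum_insert hmem2, Finset.sum_singleton]; exact hw1)] at hwq
      rw [Finset.sum_insert hmem1, Finset.sum_insert hmem2, Finset.sum_singleton] at hwq
      simp only [id] at hwq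
      obtain ⟨h1, h2, h3⟩ := tau_eq q (wf vi) (wf vj) (wf vk) (by linarith) (by rw [← hwq]; module)
      refine ⟨h1 ▸ hw0 vi (by simp), h2 ▸ hw0 vj (by simp), h3 ▸ hw0 vk (by simp)⟩
    · rintro ⟨h1, h2, h3⟩
      have hsq := (hbary q).1
      have hrq := (hbary q).2
      have hcm := Finset.centerMass_mem_convexHull (t := (Finset.univ : Finset (Fin 3)))
        (w := ![τi q, τj q, τk q]) (s := ({vi, vj, vk} : Set (EuclideanSpace ℝ (Fin 2))))
        (z := ![vi, vj, vk])
        (by intro i _; fin_cases i <;> simpa using by assumption)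
        (by rw [Fin.sum_univ_three]; simp; linarith)
        (by intro i _; fin_cases i <;> simp)
      rw [Finset.centerMass_eq_of_sum_1 _ _ (by rw [Fin.sum_univ_three]; simp; linarith)] at hcm
      rw [Fin.sum_univ_three] at hcm
      simpa [← hrq] using hcm
  -- the point p on the open segment
  obtain ⟨a, bcoef, ha, hb, hab, hpeq⟩ := hp
  have hprep : p = a • vi + bcoef • vj + (0:ℝ) • vk := by rw [← hpeq]; module
  obtain ⟨hpi, hpj, hpk⟩ := tau_eq p a bcoef 0 (by linarith) hprep
  classical
  set G' : EuclideanSpace ℝ (Fin 2) → ℝ := fun q => if 0 ≤ τk q then P q else P' q with hG'def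
  have hev : S =ᶠ[nhds p] G' := by
    have hopen : IsOpen {q : EuclideanSpace ℝ (Fin 2) | 0 < τi q ∧ 0 < τj q} :=
      (isOpen_lt continuous_const hτic.continuous).inter
        (isOpen_lt continuous_const hτjc.continuous)
    filter_upwards [hopen.mem_nhds ⟨by rw [hpi]; exact ha, by rw [hpj]; exact hb⟩] with q hq
    by_cases hcase : 0 ≤ τk q
    · rw [(hS q).1 ((hull_iff q).mpr ⟨le_of_lt hq.1, le_of_lt hq.2, hcase⟩)]
      simp [hG'def, hcase]
    · rw [(hS q).2 (fun hmem => hcase ((hull_iff q).mp hmem).2.2)]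
      simp [hG'def, hcase]
  refine ContDiffAt.congr_of_eventuallyEq ?_ hev
  suffices hG : ContDiff ℝ 1 G' from hG.contDiffAt
  rw [contDiff_one_iff_fderiv]
  have hHf : ∀ x, HasFDerivAt G' (if 0 ≤ τk x then fderiv ℝ P x else fderiv ℝ P' x) x := by
    intro x
    rcases lt_trichotomy (τk x) 0 with hx | hx | hx
    · have hev2 : G' =ᶠ[nhds x] P' := by
        filter_upwards [(isOpen_lt hτkc.continuous continuous_const).mem_nhds hx] with q hq
        simp [hG'def, not_le.mpr hq]
      have hres := (hdP' x).hasFDerivAt.congr_of_eventuallyEq hev2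
      rwa [if_neg (not_le.mpr hx)]
    · obtain ⟨hD0, hDf⟩ := key x hx
      have hGsplit : G' = fun q => P q + (if 0 ≤ τk q then 0 else (P' q - P q)) := by
        funext q; by_cases hq : 0 ≤ τk q <;> simp [hG'def, hq]
      have hR : HasFDerivAt (fun q : EuclideanSpace ℝ (Fin 2) =>
          if 0 ≤ τk q then (0:ℝ) else (P' q - P q))
          (0 : EuclideanSpace ℝ (Fin 2) →L[ℝ] ℝ) x := by
        rw [hasFDerivAt_iff_isLittleO_nhds_zero]
        have hx0 : (0:ℝ) ≤ τk x := le_of_eq hx.symm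
        have hlil : (fun h : EuclideanSpace ℝ (Fin 2) => P' (x + h) - P (x + h))
            =o[nhds 0] fun h => h := by
          have hdd : DifferentiableAt ℝ (fun q => P' q - P q) x := (hdP' x).sub (hdP x)
          have h2 := hdd.hasFDerivAt
          rw [hDf, hasFDerivAt_iff_isLittleO_nhds_zero] at h2
          simpa [hD0] using h2
        refine (Asymptotics.isBigO_of_le _ fun h => ?_).trans_isLittleO hlil
        simp only [if_pos hx0, sub_zero, ContinuousLinearMap.zero_apply]
        by_cases hq : 0 ≤ τk (x + h)
        · simp [hq]
        · simp [hq]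
      have hres := (hdP x).hasFDerivAt.fun_add hR
      rw [← hGsplit] at hres
      rw [if_pos (le_of_eq hx.symm)]
      simpa using hres
    · have hev2 : G' =ᶠ[nhds x] P := by
        filter_upwards [(isOpen_lt continuous_const hτkc.continuous).mem_nhds hx] with q hq
        simp [hG'def, le_of_lt hq]
      have hres := (hdP x).hasFDerivAt.congr_of_eventuallyEq hev2
      rwa [if_pos (le_of_lt hx)]
  refine ⟨fun x => (hHf x).differentiableAt, ?_⟩
  have hfeq : (fderiv ℝ G') = fun x => if 0 ≤ τk x then fderiv ℝ P x else fderiv ℝ P' x :=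
    funext fun x => (hHf x).fderiv
  rw [hfeq]
  refine Continuous.if ?_ (hPc.continuous_fderiv one_ne_zero) (hP'c.continuous_fderiv one_ne_zero)
  intro q hq
  have hq0 : τk q = 0 :=
    (frontier_le_subset_eq continuous_const hτkc.continuous hq).symm
  have hkq := (key q hq0).2
  have hsub := fderiv_fun_sub (hdP' q) (hdP q)
  rw [hkq] at hsub
  exact (sub_eq_zero.mp hsub.symm).symm
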